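/- Let n ≥ 1 and let e be a random vector uniformly distributed on the unit Euclidean sphere S₂ⁿ(1) ⊂ ℝⁿ. Then for every real q with 2 ≤ q ≤ 2·ln n one has E[‖e‖_q²] ≤ (q − 1)·n^{2/q − 1}. -/

import Mathlib

open MeasureTheory Metric

/-- A probability measure on `ℝⁿ` which is carried by the unit Euclidean sphere and is
invariant under all linear isometries: the (unique) uniform distribution on the sphere. -/
def IsUniformOnSphere {n : ℕ} (σ : Measure (EuclideanSpace ℝ (Fin n))) : Prop :=
  IsProbabilityMeasure σ ∧
    σ (Metric.sphere (0 : EuclideanSpace ℝ (Fin n)) 1)ᶜ = 0 ∧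
    ∀ T : EuclideanSpace ℝ (Fin n) ≃ₗᵢ[ℝ] EuclideanSpace ℝ (Fin n), σ.map T = σ

/-- The `ℓ_q` norm `(∑ᵢ |xᵢ|^q)^{1/q}` on `ℝⁿ` (for a real exponent `q`). -/
noncomputable def lqNorm {n : ℕ} (q : ℝ) (x : EuclideanSpace ℝ (Fin n)) : ℝ :=
  (∑ i, |x i| ^ q) ^ (1 / q)


namespace SphereAux

lemma sum_split (N : ℕ) (g : ℕ → ℝ) :
    ∑ i ∈ Finset.range (2*N+1), g i
      = ∑ j ∈ Finset.range (N+1), g (2*j) + ∑ j ∈ Finset.range N, g (2*j+1) := by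
  induction N with
  | zero => simp
  | succ N ih =>
    have h1 : 2*(N+1)+1 = (2*N+1) + 1 + 1 := by ring
    rw [h1, Finset.sum_range_succ, Finset.sum_range_succ, ih,
        Finset.sum_range_succ (fun j => g (2*j)) (N+1),
        Finset.sum_range_succ (fun j => g (2*j)) N,
        Finset.sum_range_succ (fun j => g (2*j+1)) N,
        show 2*(N+1) = 2*N+1+1 from by ring]
    ring

/-- the double factorial products -/
noncomputable def df (k : ℕ) : ℝ := ∏ j ∈ Finset.range k, (2*(j:ℝ)+1)

lemma df_nonneg (k : ℕ) : 0 ≤ df k := by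
  apply Finset.prod_nonneg; intro j _; positivity

lemma df_succ (k : ℕ) : df (k+1) = (2*(k:ℝ)+1) * df k := by
  rw [df, Finset.prod_range_succ, mul_comm]; rfl

lemma df_le (k : ℕ) (hk : 1 ≤ k) : df k ≤ (2*(k:ℝ)-1)^k := by
  induction k with
  | zero => omega
  | succ k ih =>
    rcases Nat.eq_or_lt_of_le hk with h|h
    · have hk0 : k = 0 := by omega
      subst hk0
      push_cast
      norm_num [df, Finset.prod_range_one]
    · have hk1 : 1 ≤ k := by omega
      have h1 := ih hk1
      have h2 : (0:ℝ) ≤ 2*(k:ℝ)-1 := by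
        have : (1:ℝ) ≤ (k:ℝ) := by exact_mod_cast hk1
        linarith
      rw [df_succ]
      push_cast
      have h3 : (2*(k:ℝ)-1)^k ≤ (2*((k:ℝ)+1)-1)^k := by
        apply pow_le_pow_left₀ h2; linarith
      calc (2*(k:ℝ)+1) * df k ≤ (2*(k:ℝ)+1) * (2*(k:ℝ)-1)^k := by
            apply mul_le_mul_of_nonneg_left h1 (by linarith)
        _ ≤ (2*((k:ℝ)+1)-1) * (2*((k:ℝ)+1)-1)^k := by
            apply mul_le_mul (by linarith) h3 (by positivity) (by linarith)
        _ = (2*((k:ℝ)+1)-1)^(k+1) := by rw [pow_succ]; ring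

lemma df_le_special (k : ℕ) (hk : 2 ≤ k) : df (k+1) ≤ (2*(k:ℝ)-1)^(k+1) := by
  induction k with
  | zero => omega
  | succ k ih =>
    rcases Nat.lt_or_ge k 2 with h|h
    · -- k+1 = 2, i.e. k = 1
      interval_cases k
      · omega
      · norm_num [df, Finset.prod_range_succ]
    · have h1 := ih h
      have hk1 : (2:ℝ) ≤ (k:ℝ) := by exact_mod_cast h
      push_cast
      rw [df_succ]
      push_cast
      have h2 : (0:ℝ) ≤ 2*(k:ℝ)-1 := by linarith
      have h3 : (2*(k:ℝ)-1)^k ≤ (2*(k:ℝ)+1)^k := by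
        apply pow_le_pow_left₀ h2; linarith
      have h5 : (2*(k:ℝ)+3) * (2*(k:ℝ)-1) ≤ (2*(k:ℝ)+1)^2 := by nlinarith
      calc (2*((k:ℝ)+1)+1) * df (k+1) ≤ (2*(k:ℝ)+3) * (2*(k:ℝ)-1)^(k+1) := by
            apply mul_le_mul (by linarith) h1 (df_nonneg _) (by linarith)
        _ = ((2*(k:ℝ)+3) * (2*(k:ℝ)-1)) * (2*(k:ℝ)-1)^k := by rw [pow_succ]; ring
        _ ≤ (2*(k:ℝ)+1)^2 * (2*(k:ℝ)+1)^k := by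
            apply mul_le_mul h5 h3 (by positivity) (by positivity)
        _ = (2*(k:ℝ)+1)^(k+2) := by rw [← pow_add, Nat.add_comm]
        _ = (2*((k:ℝ)+1)-1)^(k+1+1) := by
            have hb : 2*((k:ℝ)+1)-1 = 2*(k:ℝ)+1 := by ring
            rw [hb]
    
/-- concavity consequence: (u/2)·log 3 ≤ log (1+u) on [0,2] -/
lemma log_ineq {u : ℝ} (h0 : 0 ≤ u) (h2 : u ≤ 2) : (u/2) * Real.log 3 ≤ Real.log (1+u) := by
  have hc := strictConcaveOn_log_Ioi.concaveOn
  have h1 : (1:ℝ) ∈ Set.Ioi (0:ℝ) := by norm_num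
  have h3 : (3:ℝ) ∈ Set.Ioi (0:ℝ) := by norm_num
  have ha : (0:ℝ) ≤ (2-u)/2 := by linarith
  have hb : (0:ℝ) ≤ u/2 := by linarith
  have hab : (2-u)/2 + u/2 = 1 := by ring
  have := hc.2 h1 h3 ha hb hab
  simp only [smul_eq_mul] at this
  rw [Real.log_one] at this
  have he : (2-u)/2 * 1 + u/2 * 3 = 1 + u := by ring
  rw [he] at this
  linarith

lemma const_ineq_low {q : ℝ} (h2 : 2 < q) (h4 : q < 4) :
    (3:ℝ) ^ ((q-2)/2) ≤ (q-1) ^ (q/2) := by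
  have hq1 : (0:ℝ) < q - 1 := by linarith
  rw [Real.rpow_def_of_pos (by norm_num : (0:ℝ) < 3), Real.rpow_def_of_pos hq1]
  apply Real.exp_le_exp.2
  have hl := log_ineq (u := q - 2) (by linarith) (by linarith)
  have he : 1 + (q-2) = q - 1 := by ring
  rw [he] at hl
  have hlog3 : 0 ≤ Real.log 3 := Real.log_nonneg (by norm_num)
  nlinarith [mul_le_mul_of_nonneg_left hl (by linarith : (0:ℝ) ≤ q/2),
    mul_nonneg (mul_nonneg (by linarith : (0:ℝ) ≤ (q-2)/2) hlog3)
      (by linarith : (0:ℝ) ≤ q/2 - 1)]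

end SphereAux

namespace Part2

variable {m : ℕ}

lemma fin_one_ne_zero : (1 : Fin (m+2)) ≠ 0 := by
  simp [Fin.ext_iff]

/-- permutation isometry -/
noncomputable def permIso (π : Equiv.Perm (Fin (m+2))) :
    EuclideanSpace ℝ (Fin (m+2)) ≃ₗᵢ[ℝ] EuclideanSpace ℝ (Fin (m+2)) :=
  LinearIsometryEquiv.piLpCongrLeft 2 ℝ ℝ π

lemma permIso_apply (π : Equiv.Perm (Fin (m+2))) (x : EuclideanSpace ℝ (Fin (m+2)))
    (i : Fin (m+2)) : permIso π x i = x (π.symm i) := rfl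

/-- sign flip of coordinate 0 -/
noncomputable def negIso :
    EuclideanSpace ℝ (Fin (m+2)) ≃ₗᵢ[ℝ] EuclideanSpace ℝ (Fin (m+2)) :=
  LinearIsometryEquiv.piLpCongrRight 2
    (fun i : Fin (m+2) => if i = 0 then LinearIsometryEquiv.neg ℝ else
      LinearIsometryEquiv.refl ℝ ℝ)

lemma negIso_apply_zero (x : EuclideanSpace ℝ (Fin (m+2))) : negIso x 0 = - x 0 := by
  simp [negIso, LinearIsometryEquiv.piLpCongrRight_apply]

lemma negIso_apply_ne (x : EuclideanSpace ℝ (Fin (m+2))) (i : Fin (m+2)) (h : i ≠ 0) :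
    negIso x i = x i := by
  simp [negIso, LinearIsometryEquiv.piLpCongrRight_apply, h]

/-- rotation in coordinates 0, 1 -/
def rotFun (c s : ℝ) (x : EuclideanSpace ℝ (Fin (m+2))) : EuclideanSpace ℝ (Fin (m+2)) :=
  WithLp.toLp 2 fun i => if i = 0 then c * x 0 + s * x 1 else if i = 1 then -s * x 0 + c * x 1 else x i

lemma rotFun_zero (c s : ℝ) (x : EuclideanSpace ℝ (Fin (m+2))) :
    rotFun c s x 0 = c * x 0 + s * x 1 := by simp [rotFun]

lemma rotFun_one (c s : ℝ) (x : EuclideanSpace ℝ (Fin (m+2))) :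
    rotFun c s x 1 = -s * x 0 + c * x 1 := by simp [rotFun, fin_one_ne_zero]

lemma rotFun_ne (c s : ℝ) (x : EuclideanSpace ℝ (Fin (m+2))) (i : Fin (m+2))
    (h0 : i ≠ 0) (h1 : i ≠ 1) : rotFun c s x i = x i := by simp [rotFun, h0, h1]

noncomputable def rotLin (c s : ℝ) (h : c^2 + s^2 = 1) :
    EuclideanSpace ℝ (Fin (m+2)) ≃ₗ[ℝ] EuclideanSpace ℝ (Fin (m+2)) where
  toFun := rotFun c s
  invFun := rotFun c (-s)
  map_add' x y := by
    ext i
    simp only [rotFun, PiLp.add_apply, PiLp.toLp_apply]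
    split_ifs <;> ring
  map_smul' r x := by
    ext i
    simp only [rotFun, PiLp.smul_apply, PiLp.toLp_apply, smul_eq_mul, RingHom.id_apply]
    split_ifs <;> ring
  left_inv x := by
    show rotFun c (-s) (rotFun c s x) = x
    ext i
    rcases eq_or_ne i 0 with rfl | h0
    · rw [rotFun_zero, rotFun_zero, rotFun_one]
      linear_combination (x 0) * h
    · rcases eq_or_ne i 1 with rfl | h1
      · rw [rotFun_one, rotFun_zero, rotFun_one]
        linear_combination (x 1) * h
      · rw [rotFun_ne _ _ _ _ h0 h1, rotFun_ne _ _ _ _ h0 h1]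
  right_inv x := by
    show rotFun c s (rotFun c (-s) x) = x
    ext i
    rcases eq_or_ne i 0 with rfl | h0
    · rw [rotFun_zero, rotFun_zero, rotFun_one]
      linear_combination (x 0) * h
    · rcases eq_or_ne i 1 with rfl | h1
      · rw [rotFun_one, rotFun_zero, rotFun_one]
        linear_combination (x 1) * h
      · rw [rotFun_ne _ _ _ _ h0 h1, rotFun_ne _ _ _ _ h0 h1]

lemma sum_split_two (g : Fin (m+2) → ℝ) :
    ∑ i, g i = g 0 + (g 1 + ∑ i ∈ (Finset.univ.erase 0).erase 1, g i) := by
  rw [Finset.add_sum_erase _ g (Finset.mem_erase.2 ⟨fin_one_ne_zero, Finset.mem_univ _⟩),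
      Finset.add_sum_erase _ g (Finset.mem_univ 0)]

noncomputable def rotIso (c s : ℝ) (h : c^2 + s^2 = 1) :
    EuclideanSpace ℝ (Fin (m+2)) ≃ₗᵢ[ℝ] EuclideanSpace ℝ (Fin (m+2)) :=
  { rotLin c s h with
    norm_map' := by
      intro x
      have hx : rotLin c s h x = rotFun c s x := rfl
      rw [hx, EuclideanSpace.norm_eq, EuclideanSpace.norm_eq]
      congr 1
      rw [sum_split_two (fun i => ‖rotFun c s x i‖^2), sum_split_two (fun i => ‖x i‖^2)]
      have he : ∑ i ∈ (Finset.univ.erase 0).erase 1, ‖rotFun c s x i‖^2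
          = ∑ i ∈ (Finset.univ.erase 0).erase 1, ‖x i‖^2 := by
        apply Finset.sum_congr rfl
        intro i hi
        rcases Finset.mem_erase.1 hi with ⟨h1, h2⟩
        rcases Finset.mem_erase.1 h2 with ⟨h0, _⟩
        rw [rotFun_ne _ _ _ _ h0 h1]
      rw [he, rotFun_zero, rotFun_one]
      simp only [Real.norm_eq_abs, sq_abs]
      linear_combination (x 0^2 + x 1^2) * h }

lemma rotIso_apply (c s : ℝ) (h : c^2+s^2=1) (x : EuclideanSpace ℝ (Fin (m+2))) :
    rotIso c s h x = rotFun c s x := rfl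

end Part2

namespace Part2
open SphereAux

variable {m : ℕ} {σ : Measure (EuclideanSpace ℝ (Fin (m+2)))}

lemma meas_coord (i : Fin (m+2)) : Measurable fun x : EuclideanSpace ℝ (Fin (m+2)) => x i :=
  (EuclideanSpace.proj (𝕜 := ℝ) i).continuous.measurable

lemma meas_pow (a b : ℕ) (i j : Fin (m+2)) :
    Measurable fun x : EuclideanSpace ℝ (Fin (m+2)) => (x i)^a * (x j)^b :=
  ((meas_coord i).pow_const a).mul ((meas_coord j).pow_const b)

lemma isProb (hσ : IsUniformOnSphere σ) : IsProbabilityMeasure σ := hσ.1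

lemma integral_comp (hσ : IsUniformOnSphere σ)
    (T : EuclideanSpace ℝ (Fin (m+2)) ≃ₗᵢ[ℝ] EuclideanSpace ℝ (Fin (m+2)))
    {f : EuclideanSpace ℝ (Fin (m+2)) → ℝ} (hf : AEStronglyMeasurable f σ) :
    ∫ x, f (T x) ∂σ = ∫ x, f x ∂σ := by
  have hm := hσ.2.2 T
  have h1 : ∫ x, f x ∂(σ.map T) = ∫ x, f (T x) ∂σ :=
    integral_map T.continuous.measurable.aemeasurable (by rw [hm]; exact hf)
  rw [hm] at h1
  exact h1.symm

lemma ae_sphere (hσ : IsUniformOnSphere σ) : ∀ᵐ x ∂σ, ∑ i, (x i)^2 = 1 := by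
  have h0 : ∀ᵐ x ∂σ, x ∈ sphere (0 : EuclideanSpace ℝ (Fin (m+2))) 1 := by
    rw [ae_iff]
    exact hσ.2.1
  filter_upwards [h0] with x hx
  rw [mem_sphere_zero_iff_norm, EuclideanSpace.norm_eq] at hx
  have h2 : ∑ i, ‖x i‖^2 = 1 := Real.sqrt_eq_one.mp hx
  simpa [Real.norm_eq_abs, sq_abs] using h2

lemma ae_abs (hσ : IsUniformOnSphere σ) (i : Fin (m+2)) : ∀ᵐ x ∂σ, |x i| ≤ 1 := by
  filter_upwards [ae_sphere hσ] with x hx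
  have h1 : (x i)^2 ≤ 1 := by
    rw [← hx]
    exact Finset.single_le_sum (fun j _ => sq_nonneg (x j)) (Finset.mem_univ i)
  have h2 : |x i|^2 ≤ 1 := by rwa [sq_abs]
  exact (pow_le_one_iff_of_nonneg (abs_nonneg _) two_ne_zero).1 h2

lemma integrable_bd (hσ : IsUniformOnSphere σ)
    {f : EuclideanSpace ℝ (Fin (m+2)) → ℝ} (hf : Measurable f)
    (hb : ∀ᵐ x ∂σ, |f x| ≤ 1) : Integrable f σ := by
  haveI := hσ.1
  exact (integrable_const (1:ℝ)).mono' hf.aestronglyMeasurable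
    (by simpa [Real.norm_eq_abs] using hb)

lemma abs_bound (hσ : IsUniformOnSphere σ) (a b : ℕ) (i j : Fin (m+2)) :
    ∀ᵐ x ∂σ, |(x i)^a * (x j)^b| ≤ 1 := by
  filter_upwards [ae_abs hσ i, ae_abs hσ j] with x hi hj
  rw [abs_mul, abs_pow, abs_pow]
  exact mul_le_one₀ (pow_le_one₀ (abs_nonneg _) hi) (by positivity)
    (pow_le_one₀ (abs_nonneg _) hj)

lemma integrable_pow (hσ : IsUniformOnSphere σ) (a b : ℕ) (i j : Fin (m+2)) :
    Integrable (fun x => (x i)^a * (x j)^b) σ :=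
  integrable_bd hσ (meas_pow a b i j) (abs_bound hσ a b i j)

/-- cross moments -/
noncomputable def Cm (σ : Measure (EuclideanSpace ℝ (Fin (m+2)))) (a b : ℕ) : ℝ :=
  ∫ x, (x 0)^a * (x 1)^b ∂σ

lemma Cm_nonneg (a b : ℕ) : 0 ≤ Cm σ (2*a) (2*b) :=
  integral_nonneg fun x =>
    mul_nonneg ((even_two_mul a).pow_nonneg _) ((even_two_mul b).pow_nonneg _)

lemma odd_zero (hσ : IsUniformOnSphere σ) (a b : ℕ) (ha : Odd a) : Cm σ a b = 0 := by
  have h := integral_comp hσ negIso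
    (f := fun x => (x 0)^a * (x 1)^b) (meas_pow a b 0 1).aestronglyMeasurable
  have h2 : ∀ x : EuclideanSpace ℝ (Fin (m+2)),
      ((negIso x) 0)^a * ((negIso x) 1)^b = -((x 0)^a * (x 1)^b) := by
    intro x
    rw [negIso_apply_zero, negIso_apply_ne x 1 fin_one_ne_zero, ha.neg_pow]
    ring
  simp_rw [h2, integral_neg] at h
  have : Cm σ a b = ∫ x, (x 0)^a * (x 1)^b ∂σ := rfl
  rw [this]
  linarith

lemma rot_expand (hσ : IsUniformOnSphere σ) (c s : ℝ) (hcs : c^2 + s^2 = 1) (N : ℕ) :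
    Cm σ N 0 = ∑ j ∈ Finset.range (N+1),
      ((N.choose j : ℝ) * c^j * s^(N-j)) * Cm σ j (N-j) := by
  have h := integral_comp hσ (rotIso c s hcs)
    (f := fun x => (x 0)^N * (x 1)^0) (meas_pow N 0 0 1).aestronglyMeasurable
  have h2 : ∀ x : EuclideanSpace ℝ (Fin (m+2)),
      ((rotIso c s hcs x) 0)^N * ((rotIso c s hcs x) 1)^0
        = ∑ j ∈ Finset.range (N+1),
            ((N.choose j : ℝ) * c^j * s^(N-j)) * ((x 0)^j * (x 1)^(N-j)) := by
    intro x
    rw [rotIso_apply, rotFun_zero, pow_zero, mul_one, add_pow]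
    refine Finset.sum_congr rfl fun j hj => ?_
    rw [mul_pow, mul_pow]
    ring
  simp_rw [h2] at h
  rw [integral_finset_sum _ (fun j _ => ((integrable_pow hσ j (N-j) 0 1).const_mul _))] at h
  simp_rw [integral_const_mul] at h
  simpa [Cm] using h.symm

lemma even_sum (hσ : IsUniformOnSphere σ) (k : ℕ) {t : ℝ} (ht : t ∈ Set.Ioo (0:ℝ) 1) :
    Cm σ (2*k) 0 = ∑ j ∈ Finset.range (k+1),
      ((Nat.choose (2*k) (2*j) : ℝ) * t^j * (1-t)^(k-j)) * Cm σ (2*j) (2*k-2*j) := by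
  have h1t : (0:ℝ) ≤ 1 - t := by linarith [ht.2]
  have hcs : (Real.sqrt t)^2 + (Real.sqrt (1-t))^2 = 1 := by
    rw [Real.sq_sqrt ht.1.le, Real.sq_sqrt h1t]
    ring
  have h := rot_expand hσ (Real.sqrt t) (Real.sqrt (1-t)) hcs (2*k)
  rw [sum_split k (fun i => ((Nat.choose (2*k) i : ℝ) * (Real.sqrt t)^i *
      (Real.sqrt (1-t))^(2*k-i)) * Cm σ i (2*k-i))] at h
  have hodd : ∑ j ∈ Finset.range k, ((Nat.choose (2*k) (2*j+1) : ℝ) * (Real.sqrt t)^(2*j+1) *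
      (Real.sqrt (1-t))^(2*k-(2*j+1))) * Cm σ (2*j+1) (2*k-(2*j+1)) = 0 := by
    refine Finset.sum_eq_zero fun j _ => ?_
    rw [odd_zero hσ _ _ (odd_two_mul_add_one j), mul_zero]
  rw [hodd, add_zero] at h
  rw [h]
  refine Finset.sum_congr rfl fun j _ => ?_
  rw [pow_mul, Real.sq_sqrt ht.1.le,
      show 2*k - 2*j = 2*(k-j) by omega, pow_mul, Real.sq_sqrt h1t]

end Part2

namespace Part2
open SphereAux

variable {m : ℕ} {σ : Measure (EuclideanSpace ℝ (Fin (m+2)))}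

noncomputable def Gf (σ : Measure (EuclideanSpace ℝ (Fin (m+2)))) (K : ℕ) : ℝ → ℝ :=
  fun t => ∑ j ∈ Finset.range (K+1),
    ((Nat.choose (2*(K+1)) (2*j) : ℝ) * t^j * (1-t)^(K-j)) * Cm σ (2*j) (2*(K+1)-2*j)

noncomputable def Hf (σ : Measure (EuclideanSpace ℝ (Fin (m+2)))) (K : ℕ) : ℝ → ℝ :=
  fun t => Cm σ (2*(K+1)) 0 * ∑ i ∈ Finset.range (K+1), t^i

lemma Gf_cont (K : ℕ) : Continuous (Gf σ K) := by
  apply continuous_finset_sum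
  intro j _
  exact ((continuous_const.mul (continuous_pow j)).mul
    ((continuous_const.sub continuous_id).pow (K-j))).mul continuous_const

lemma Hf_cont (K : ℕ) : Continuous (Hf σ K) :=
  continuous_const.mul (continuous_finset_sum _ fun i _ => continuous_pow i)

lemma GH_eqOn (hσ : IsUniformOnSphere σ) (K : ℕ) :
    Set.EqOn (Gf σ K) (Hf σ K) (Set.Ioo 0 1) := by
  intro t ht
  have hb := even_sum hσ (K+1) ht
  rw [Finset.sum_range_succ] at hb
  simp only [Nat.choose_self, Nat.sub_self, pow_zero, Nat.cast_one, one_mul, mul_one] at hb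
  have hsum : ∑ j ∈ Finset.range (K+1),
      ((Nat.choose (2*(K+1)) (2*j) : ℝ) * t^j * (1-t)^(K+1-j)) * Cm σ (2*j) (2*(K+1)-2*j)
      = (1-t) * Gf σ K t := by
    rw [Gf, Finset.mul_sum]
    refine Finset.sum_congr rfl fun j hj => ?_
    have hj' : j ≤ K := Nat.lt_succ_iff.mp (Finset.mem_range.1 hj)
    rw [show K+1-j = (K-j)+1 from by omega, pow_succ]
    ring
  rw [hsum] at hb
  have hgeo := geom_sum_mul t (K+1)
  have h1t : (1:ℝ) - t ≠ 0 := sub_ne_zero.2 (ne_of_gt ht.2)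
  apply mul_left_cancel₀ h1t
  show (1-t) * Gf σ K t = (1-t) * (Cm σ (2*(K+1)) 0 * ∑ i ∈ Finset.range (K+1), t^i)
  linear_combination -hb + Cm σ (2*(K+1)) 0 * hgeo

lemma choose_val (K : ℕ) : Nat.choose (2*(K+1)) (2*K) = (K+1)*(2*K+1) := by
  rw [show 2*K = 2*(K+1) - 2 from by omega, Nat.choose_symm (by omega), Nat.choose_two_right]
  rw [show 2*(K+1)-1 = 2*K+1 from by omega,
      show 2*(K+1) * (2*K+1) = ((K+1)*(2*K+1))*2 from by ring]
  exact Nat.mul_div_cancel _ (by norm_num)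

lemma key (hσ : IsUniformOnSphere σ) (K : ℕ) :
    Cm σ (2*(K+1)) 0 = (2*(K:ℝ)+1) * Cm σ (2*K) 2 := by
  have hcont : (1:ℝ) ∈ closure (Set.Ioo (0:ℝ) 1) := by
    rw [closure_Ioo (zero_ne_one)]
    exact Set.right_mem_Icc.2 zero_le_one
  have h1 := (GH_eqOn hσ K).closure (Gf_cont K) (Hf_cont K) hcont
  have hG1 : Gf σ K 1 = ((K:ℝ)+1) * ((2*(K:ℝ)+1) * Cm σ (2*K) 2) := by
    rw [Gf, Finset.sum_eq_single K]
    · rw [Nat.sub_self, pow_zero, one_pow, show 2*(K+1)-2*K = 2 from by omega, choose_val]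
      push_cast
      ring
    · intro j hj hne
      have hj' : j < K := by
        have := Nat.lt_succ_iff.mp (Finset.mem_range.1 hj)
        omega
      rw [sub_self, zero_pow (show K - j ≠ 0 by omega)]
      ring
    · intro h
      exact absurd (Finset.self_mem_range_succ K) h
  have hH1 : Hf σ K 1 = Cm σ (2*(K+1)) 0 * ((K:ℝ)+1) := by
    rw [Hf]
    simp
  rw [hG1, hH1] at h1
  have hK : ((K:ℝ)+1) ≠ 0 := by positivity
  apply mul_left_cancel₀ hK
  linear_combination -h1

lemma recursion (hσ : IsUniformOnSphere σ) (K : ℕ) :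
    ((m:ℝ)+2) * Cm σ (2*(K+1)) 0 ≤ (2*(K:ℝ)+1) * Cm σ (2*K) 0 := by
  have hdecomp : Cm σ (2*K) 0 = Cm σ (2*(K+1)) 0 + ((m:ℝ)+1) * Cm σ (2*K) 2 := by
    have h1 : Cm σ (2*K) 0 = ∫ x, ∑ i, (x 0)^(2*K) * (x i)^2 ∂σ := by
      rw [Cm]
      apply integral_congr_ae
      filter_upwards [ae_sphere hσ] with x hx
      rw [← Finset.mul_sum, hx, pow_zero]
    have h2 : ∫ x, ∑ i, (x 0)^(2*K) * (x i)^2 ∂σ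
        = ∑ i, ∫ x, (x 0)^(2*K) * (x i)^2 ∂σ :=
      integral_finset_sum _ (fun i _ => integrable_pow hσ (2*K) 2 0 i)
    have h3 : ∀ i : Fin (m+2), i ≠ 0 → ∫ x, (x 0)^(2*K) * (x i)^2 ∂σ = Cm σ (2*K) 2 := by
      intro i hi
      have hswap := integral_comp hσ (permIso (Equiv.swap 1 i))
        (f := fun x => (x 0)^(2*K) * (x 1)^2) (meas_pow _ _ 0 1).aestronglyMeasurable
      have hv : ∀ x : EuclideanSpace ℝ (Fin (m+2)),
          ((permIso (Equiv.swap 1 i) x) 0)^(2*K) * ((permIso (Equiv.swap 1 i) x) 1)^2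
            = (x 0)^(2*K) * (x i)^2 := by
        intro x
        rw [permIso_apply, permIso_apply, Equiv.symm_swap,
            Equiv.swap_apply_of_ne_of_ne fin_one_ne_zero.symm (Ne.symm hi),
            Equiv.swap_apply_left]
      simp_rw [hv] at hswap
      exact hswap
    rw [h1, h2, ← Finset.add_sum_erase _ _ (Finset.mem_univ (0 : Fin (m+2)))]
    have h4 : ∫ x, (x 0)^(2*K) * ((x 0):ℝ)^2 ∂σ = Cm σ (2*(K+1)) 0 := by
      rw [Cm]
      refine integral_congr_ae (Filter.Eventually.of_forall fun x => ?_)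
      show (x 0)^(2*K) * (x 0)^2 = (x 0)^(2*(K+1)) * (x 1)^0
      rw [← pow_add, pow_zero, mul_one, show 2*K+2 = 2*(K+1) from by ring]
    have h5 : ∑ i ∈ Finset.univ.erase (0 : Fin (m+2)), ∫ x, (x 0)^(2*K) * (x i)^2 ∂σ
        = ((m:ℝ)+1) * Cm σ (2*K) 2 := by
      rw [Finset.sum_congr rfl (fun i hi => h3 i (Finset.mem_erase.1 hi).1), Finset.sum_const,
          Finset.card_erase_of_mem (Finset.mem_univ _)]
      simp only [Finset.card_univ, Fintype.card_fin, nsmul_eq_mul]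
      push_cast
      norm_num
    rw [h4, h5]
  have hkey := key hσ K
  have hpos : (0:ℝ) ≤ Cm σ (2*K) 2 := by
    have := Cm_nonneg (σ := σ) K 1
    simpa using this
  nlinarith [hkey, hdecomp, mul_nonneg (mul_nonneg (show (0:ℝ) ≤ 2*(K:ℝ)+1 by positivity)
    (show (0:ℝ) ≤ 2*(K:ℝ) by positivity)) hpos]

lemma even_bound (hσ : IsUniformOnSphere σ) : ∀ k : ℕ, Cm σ (2*k) 0 ≤ df k / ((m:ℝ)+2)^k := by
  intro k
  induction k with
  | zero =>
    haveI := hσ.1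
    have h0 : Cm σ (2*0) 0 = 1 := by
      simp [Cm]
    rw [h0]
    simp [df]
  | succ k ih =>
    have hrec := recursion hσ k
    have hpos2 : (0:ℝ) < (m:ℝ)+2 := by positivity
    have h0 : Cm σ (2*(k+1)) 0 ≤ (2*(k:ℝ)+1) * Cm σ (2*k) 0 / ((m:ℝ)+2) := by
      rw [le_div_iff₀ hpos2, mul_comm (Cm σ (2*(k+1)) 0) ((m:ℝ)+2)]
      exact hrec
    have h1 : (2*(k:ℝ)+1) * Cm σ (2*k) 0 / ((m:ℝ)+2)
        ≤ (2*(k:ℝ)+1) * (df k / ((m:ℝ)+2)^k) / ((m:ℝ)+2) := by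
      gcongr
    calc Cm σ (2*(k+1)) 0 ≤ (2*(k:ℝ)+1) * Cm σ (2*k) 0 / ((m:ℝ)+2) := h0
      _ ≤ (2*(k:ℝ)+1) * (df k / ((m:ℝ)+2)^k) / ((m:ℝ)+2) := h1
      _ = df (k+1) / ((m:ℝ)+2)^(k+1) := by
          rw [df_succ, pow_succ]
          push_cast
          field_simp

end Part2

namespace Part2
open SphereAux

variable {m : ℕ} {σ : Measure (EuclideanSpace ℝ (Fin (m+2)))}

noncomputable def mq (σ : Measure (EuclideanSpace ℝ (Fin (m+2)))) (r : ℝ) : ℝ :=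
  ∫ x, |x 0| ^ r ∂σ

lemma meas_rpow {r : ℝ} (hr : 0 ≤ r) (i : Fin (m+2)) :
    Measurable fun x : EuclideanSpace ℝ (Fin (m+2)) => |x i| ^ r :=
  ((Real.continuous_rpow_const hr).comp
    (continuous_abs.comp (EuclideanSpace.proj (𝕜 := ℝ) i).continuous)).measurable

lemma integrable_rpow (hσ : IsUniformOnSphere σ) {r : ℝ} (hr : 0 ≤ r) (i : Fin (m+2)) :
    Integrable (fun x => |x i| ^ r) σ := by
  apply integrable_bd hσ (meas_rpow hr i)
  filter_upwards [ae_abs hσ i] with x hx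
  rw [abs_of_nonneg (Real.rpow_nonneg (abs_nonneg _) _)]
  exact Real.rpow_le_one (abs_nonneg _) hx hr

lemma mq_even (k : ℕ) : mq σ ((2*k : ℕ) : ℝ) = Cm σ (2*k) 0 := by
  rw [mq, Cm]
  refine integral_congr_ae (Filter.Eventually.of_forall fun x => ?_)
  show |x 0| ^ ((2*k : ℕ) : ℝ) = (x 0)^(2*k) * (x 1)^0
  rw [Real.rpow_natCast, Even.pow_abs (even_two_mul k), pow_zero, mul_one]

lemma mq_interp (hσ : IsUniformOnSphere σ) {r1 r2 θ : ℝ} (h1 : 0 < r1) (h2 : 0 ≤ r2)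
    (hθ : θ ∈ Set.Ioo (0:ℝ) 1) :
    mq σ (θ*r1 + (1-θ)*r2) ≤ mq σ r1 ^ θ * mq σ r2 ^ (1-θ) := by
  haveI := hσ.1
  have hθ0 := hθ.1
  have hθ1 := hθ.2
  have h1θ : (0:ℝ) < 1 - θ := by linarith
  have hconj : Real.HolderConjugate (1/θ) (1/(1-θ)) := by
    rw [Real.holderConjugate_iff]
    constructor
    · exact one_lt_one_div hθ0 hθ1
    · rw [one_div, one_div, inv_inv, inv_inv]
      ring
  have hbd : ∀ r : ℝ, 0 ≤ r → ∀ p : ENNReal,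
      MemLp (fun x : EuclideanSpace ℝ (Fin (m+2)) => |x 0| ^ r) p σ := by
    intro r hr p
    apply MemLp.of_bound (meas_rpow hr 0).aestronglyMeasurable 1
    filter_upwards [ae_abs hσ 0] with x hx
    rw [Real.norm_eq_abs, abs_of_nonneg (Real.rpow_nonneg (abs_nonneg _) _)]
    exact Real.rpow_le_one (abs_nonneg _) hx hr
  have hH := integral_mul_le_Lp_mul_Lq_of_nonneg (μ := σ) hconj
    (f := fun x => |x 0| ^ (θ*r1)) (g := fun x => |x 0| ^ ((1-θ)*r2))
    (Filter.Eventually.of_forall fun x => Real.rpow_nonneg (abs_nonneg _) _)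
    (Filter.Eventually.of_forall fun x => Real.rpow_nonneg (abs_nonneg _) _)
    (hbd _ (by positivity) _) (hbd _ (by positivity) _)
  have e1 : ∀ x : EuclideanSpace ℝ (Fin (m+2)),
      |x 0|^(θ*r1) * |x 0|^((1-θ)*r2) = |x 0|^(θ*r1+(1-θ)*r2) := fun x =>
    (Real.rpow_add' (abs_nonneg _) (by positivity)).symm
  have e2 : ∀ x : EuclideanSpace ℝ (Fin (m+2)),
      (|x 0|^(θ*r1))^(1/θ : ℝ) = |x 0|^r1 := fun x => by
    rw [← Real.rpow_mul (abs_nonneg _)]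
    congr 1
    field_simp
  have e3 : ∀ x : EuclideanSpace ℝ (Fin (m+2)),
      (|x 0|^((1-θ)*r2))^(1/(1-θ) : ℝ) = |x 0|^r2 := fun x => by
    rw [← Real.rpow_mul (abs_nonneg _)]
    congr 1
    field_simp
  simp_rw [e1, e2, e3, one_div_one_div] at hH
  exact hH

lemma Cm_even_nonneg (k : ℕ) : 0 ≤ Cm σ (2*k) 0 := by
  have := Cm_nonneg (σ := σ) k 0
  simpa using this

lemma df_two : df 2 = 3 := by
  norm_num [df, Finset.prod_range_succ]

lemma moment_bound (hσ : IsUniformOnSphere σ) {q : ℝ} (hq : 2 < q) :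
    mq σ q ≤ ((q-1)/((m:ℝ)+2)) ^ (q/2 : ℝ) := by
  have hn : (0:ℝ) < (m:ℝ)+2 := by positivity
  have hq1 : (0:ℝ) < q - 1 := by linarith
  set k : ℕ := Nat.floor (q/2) with hkdef
  have hk1 : 1 ≤ k := Nat.le_floor (by linarith [show (1:ℝ) ≤ q/2 by linarith])
  have hkr : (1:ℝ) ≤ (k:ℝ) := by exact_mod_cast hk1
  have h2k : 2*(k:ℝ) ≤ q := by
    have := Nat.floor_le (show (0:ℝ) ≤ q/2 by linarith)
    rw [← hkdef] at this
    linarith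
  have hq2k2 : q < 2*(k:ℝ)+2 := by
    have := Nat.lt_floor_add_one (q/2)
    rw [← hkdef] at this
    linarith
  rcases eq_or_lt_of_le h2k with heq | hlt
  · -- q is the even integer 2k
    have hmq : mq σ q = Cm σ (2*k) 0 := by
      rw [← heq] at *
      have := mq_even (σ := σ) k
      rw [show ((2*k : ℕ) : ℝ) = 2*(k:ℝ) by push_cast; ring] at this
      exact this
    have hb := even_bound hσ k
    have hd := df_le k hk1
    have hq2 : q/2 = ((k:ℕ):ℝ) := by rw [← heq]; ring
    rw [hmq, hq2, Real.rpow_natCast, div_pow]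
    have hq1k : (2*(k:ℝ)-1) = q-1 := by linarith
    have he : df k ≤ (q-1)^k := by rw [← hq1k]; exact hd
    calc Cm σ (2*k) 0 ≤ df k / ((m:ℝ)+2)^k := hb
      _ ≤ (q-1)^k / ((m:ℝ)+2)^k := by gcongr
  · -- 2k < q < 2k+2
    set θ : ℝ := (2*(k:ℝ)+2-q)/2 with hθdef
    have hθIoo : θ ∈ Set.Ioo (0:ℝ) 1 := by
      constructor
      · rw [hθdef]; linarith
      · rw [hθdef]; linarith
    have hcomb : θ*((2*k:ℕ):ℝ) + (1-θ)*((2*(k+1):ℕ):ℝ) = q := by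
      push_cast
      rw [hθdef]
      ring
    have hI := mq_interp hσ (r1 := ((2*k:ℕ):ℝ)) (r2 := ((2*(k+1):ℕ):ℝ))
      (by push_cast; linarith) (Nat.cast_nonneg _) hθIoo
    rw [hcomb, mq_even, mq_even] at hI
    have hb1 : Cm σ (2*k) 0 ^ θ ≤ (df k / ((m:ℝ)+2)^k) ^ θ :=
      Real.rpow_le_rpow (Cm_even_nonneg k) (even_bound hσ k) hθIoo.1.le
    have hb2 : Cm σ (2*(k+1)) 0 ^ (1-θ) ≤ (df (k+1) / ((m:ℝ)+2)^(k+1)) ^ (1-θ) :=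
      Real.rpow_le_rpow (Cm_even_nonneg (k+1)) (even_bound hσ (k+1)) (by linarith [hθIoo.2])
    have hstep : mq σ q ≤ (df k / ((m:ℝ)+2)^k) ^ θ * (df (k+1) / ((m:ℝ)+2)^(k+1)) ^ (1-θ) :=
      hI.trans (mul_le_mul hb1 hb2 (Real.rpow_nonneg (Cm_even_nonneg (k+1)) _)
        (Real.rpow_nonneg (div_nonneg (df_nonneg k) (by positivity)) _))
    have hLHS : (df k / ((m:ℝ)+2)^k)^θ * (df (k+1) / ((m:ℝ)+2)^(k+1))^(1-θ)
        = (df k^θ * df (k+1)^(1-θ)) / ((m:ℝ)+2)^(q/2 : ℝ) := by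
      rw [Real.div_rpow (df_nonneg k) (by positivity),
          Real.div_rpow (df_nonneg (k+1)) (by positivity), div_mul_div_comm,
          ← Real.rpow_natCast ((m:ℝ)+2) k, ← Real.rpow_natCast ((m:ℝ)+2) (k+1),
          ← Real.rpow_mul hn.le, ← Real.rpow_mul hn.le, ← Real.rpow_add hn]
      congr 2
      push_cast
      rw [hθdef]
      ring
    have hNUM : df k^θ * df (k+1)^(1-θ) ≤ (q-1) ^ (q/2 : ℝ) := by
      have hexp : (k:ℝ)*θ + ((k:ℝ)+1)*(1-θ) = q/2 := by rw [hθdef]; ring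
      rcases eq_or_lt_of_le hk1 with hk1' | hk2
      · -- k = 1
        have hkk : k = 1 := hk1'.symm
        rw [hkk]
        have hd1 : df 1 = 1 := by norm_num [df, Finset.prod_range_one]
        rw [hd1, Real.one_rpow, one_mul, show (1+1 : ℕ) = 2 from rfl, df_two]
        have hθeq : 1 - θ = (q-2)/2 := by
          rw [hθdef, hkk]
          push_cast
          ring
        rw [hθeq]
        have hq4 : q < 4 := by
          rw [hkk] at hq2k2
          push_cast at hq2k2
          linarith
        exact const_ineq_low hq hq4
      · -- 2 ≤ k
        have hk2' : 2 ≤ k := hk2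
        have hbase : 2*(k:ℝ)-1 ≤ q-1 := by linarith
        have hbase0 : (0:ℝ) ≤ 2*(k:ℝ)-1 := by linarith
        have e1 : df k ≤ (q-1)^k :=
          (df_le k hk1).trans (pow_le_pow_left₀ hbase0 hbase k)
        have e2 : df (k+1) ≤ (q-1)^(k+1) :=
          (df_le_special k hk2').trans (pow_le_pow_left₀ hbase0 hbase (k+1))
        have f1 : df k ^ θ ≤ ((q-1)^k : ℝ) ^ θ :=
          Real.rpow_le_rpow (df_nonneg k) e1 hθIoo.1.le
        have f2 : df (k+1) ^ (1-θ) ≤ ((q-1)^(k+1) : ℝ) ^ (1-θ) :=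
          Real.rpow_le_rpow (df_nonneg (k+1)) e2 (by linarith [hθIoo.2])
        calc df k^θ * df (k+1)^(1-θ)
            ≤ ((q-1)^k : ℝ)^θ * ((q-1)^(k+1) : ℝ)^(1-θ) :=
              mul_le_mul f1 f2 (Real.rpow_nonneg (df_nonneg _) _) (Real.rpow_nonneg (by positivity) _)
          _ = (q-1) ^ (q/2 : ℝ) := by
              rw [← Real.rpow_natCast (q-1) k, ← Real.rpow_natCast (q-1) (k+1),
                  ← Real.rpow_mul hq1.le, ← Real.rpow_mul hq1.le, ← Real.rpow_add hq1]
              congr 1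
              push_cast
              rw [hθdef]
              ring
    calc mq σ q ≤ (df k / ((m:ℝ)+2)^k)^θ * (df (k+1) / ((m:ℝ)+2)^(k+1))^(1-θ) := hstep
      _ = (df k^θ * df (k+1)^(1-θ)) / ((m:ℝ)+2)^(q/2 : ℝ) := hLHS
      _ ≤ (q-1)^(q/2 : ℝ) / ((m:ℝ)+2)^(q/2 : ℝ) := by gcongr
      _ = ((q-1)/((m:ℝ)+2)) ^ (q/2 : ℝ) := (Real.div_rpow hq1.le hn.le _).symm

end Part2

namespace Part2
open SphereAux

variable {m : ℕ} {σ : Measure (EuclideanSpace ℝ (Fin (m+2)))}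

lemma coord_moment (hσ : IsUniformOnSphere σ) {q : ℝ} (hq : 0 ≤ q) (i : Fin (m+2)) :
    ∫ x, |x i| ^ q ∂σ = mq σ q := by
  have h := integral_comp hσ (permIso (Equiv.swap 0 i))
    (f := fun x => |x 0| ^ q) (meas_rpow hq 0).aestronglyMeasurable
  have hv : ∀ x : EuclideanSpace ℝ (Fin (m+2)),
      |permIso (Equiv.swap 0 i) x 0| ^ q = |x i| ^ q := by
    intro x
    rw [permIso_apply, Equiv.symm_swap, Equiv.swap_apply_left]
  simp_rw [hv] at h
  exact h

lemma final' (hσ : IsUniformOnSphere σ) {q : ℝ} (hq2 : 2 ≤ q) :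
    ∫ x, lqNorm q x ^ 2 ∂σ ≤ (q-1) * (((m+2:ℕ)):ℝ) ^ (2/q - 1 : ℝ) := by
  haveI := hσ.1
  have hcast : (((m+2:ℕ)):ℝ) = (m:ℝ)+2 := by push_cast; ring
  rw [hcast]
  have hn : (0:ℝ) < (m:ℝ)+2 := by positivity
  rcases eq_or_lt_of_le hq2 with heq | hq
  · -- q = 2
    rw [← heq]
    have hsq : ∀ᵐ x ∂σ, lqNorm (2:ℝ) x ^ 2 = 1 := by
      filter_upwards [ae_sphere hσ] with x hx
      rw [lqNorm]
      have hs : ∑ i, |x i| ^ (2:ℝ) = 1 := by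
        rw [← hx]
        refine Finset.sum_congr rfl fun i _ => ?_
        rw [show (2:ℝ) = ((2:ℕ):ℝ) by norm_num, Real.rpow_natCast, sq_abs]
      rw [hs, Real.one_rpow, one_pow]
    have h1 : ∫ x, lqNorm (2:ℝ) x ^2 ∂σ = 1 := by
      rw [integral_congr_ae hsq]
      simp
    have hR : ((2:ℝ)-1) * ((m:ℝ)+2)^((2:ℝ)/2-1 : ℝ) = 1 := by
      norm_num
    rw [h1, hR]
  · -- 2 < q
    have hq0 : (0:ℝ) < q := by linarith
    have hq20 : (0:ℝ) ≤ 2/q := by positivity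
    have hY0 : ∀ x : EuclideanSpace ℝ (Fin (m+2)), (0:ℝ) ≤ ∑ i, |x i| ^ q :=
      fun x => Finset.sum_nonneg fun i _ => Real.rpow_nonneg (abs_nonneg _) _
    have hpt : ∀ x : EuclideanSpace ℝ (Fin (m+2)),
        lqNorm q x ^ 2 = (∑ i, |x i| ^ q) ^ (2/q : ℝ) := by
      intro x
      rw [lqNorm, ← Real.rpow_natCast ((∑ i, |x i| ^ q) ^ (1/q : ℝ)) 2,
          ← Real.rpow_mul (hY0 x)]
      congr 1
      push_cast
      ring
    have hYm : Measurable fun x : EuclideanSpace ℝ (Fin (m+2)) => ∑ i, |x i| ^ q :=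
      Finset.measurable_sum _ (fun i _ => meas_rpow (by linarith) i)
    have hYb : ∀ᵐ x ∂σ, (∑ i, |x i| ^ q) ≤ (m:ℝ)+2 := by
      have hall : ∀ᵐ x ∂σ, ∀ i, |x i| ≤ 1 := ae_all_iff.2 (ae_abs hσ)
      filter_upwards [hall] with x hx
      calc ∑ i, |x i|^q ≤ ∑ _i : Fin (m+2), (1:ℝ) :=
            Finset.sum_le_sum fun i _ => Real.rpow_le_one (abs_nonneg _) (hx i) (by linarith)
        _ = (m:ℝ)+2 := by
            rw [Finset.sum_const, Finset.card_univ, Fintype.card_fin, nsmul_eq_mul]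
            push_cast
            ring
    have hconj : Real.HolderConjugate (q/2) (q/(q-2)) := by
      rw [Real.holderConjugate_iff]
      constructor
      · linarith
      · rw [inv_div, inv_div, ← add_div, show (2:ℝ) + (q-2) = q by ring,
            div_self (by linarith : q ≠ 0)]
    have hf : MemLp (fun x : EuclideanSpace ℝ (Fin (m+2)) => (∑ i, |x i| ^ q) ^ (2/q : ℝ))
        (ENNReal.ofReal (q/2)) σ := by
      apply MemLp.of_bound
        (((Real.continuous_rpow_const hq20).measurable).comp hYm).aestronglyMeasurable
        (((m:ℝ)+2) ^ (2/q : ℝ))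
      filter_upwards [hYb] with x hx
      show ‖(∑ i, |x i| ^ q) ^ (2/q : ℝ)‖ ≤ ((m:ℝ)+2) ^ (2/q : ℝ)
      rw [Real.norm_eq_abs, abs_of_nonneg (Real.rpow_nonneg (hY0 x) _)]
      exact Real.rpow_le_rpow (hY0 x) hx hq20
    have hg : MemLp (fun _ : EuclideanSpace ℝ (Fin (m+2)) => (1:ℝ))
        (ENNReal.ofReal (q/(q-2))) σ := memLp_const 1
    have hH := integral_mul_le_Lp_mul_Lq_of_nonneg (μ := σ) hconj
      (f := fun x => (∑ i, |x i| ^ q) ^ (2/q : ℝ)) (g := fun _ => (1:ℝ))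
      (Filter.Eventually.of_forall fun x => Real.rpow_nonneg (hY0 x) _)
      (Filter.Eventually.of_forall fun _ => zero_le_one) hf hg
    simp only [mul_one, Real.one_rpow] at hH
    have e2 : ∀ x : EuclideanSpace ℝ (Fin (m+2)),
        ((∑ i, |x i| ^ q) ^ (2/q : ℝ)) ^ (q/2 : ℝ) = ∑ i, |x i| ^ q := by
      intro x
      rw [← Real.rpow_mul (hY0 x), show (2/q) * (q/2) = 1 by field_simp, Real.rpow_one]
    simp_rw [e2] at hH
    rw [integral_const] at hH
    simp only [measure_univ, probReal_univ, ENNReal.toReal_one, one_smul, Real.one_rpow, mul_one,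
      one_div_div] at hH
    -- hH : ∫ Y^{2/q} ≤ (∫ Y)^(2/q)
    have hint : ∫ x, ∑ i, |x i| ^ q ∂σ = ((m:ℝ)+2) * mq σ q := by
      rw [integral_finset_sum _ (fun i _ => integrable_rpow hσ (by linarith) i),
          Finset.sum_congr rfl (fun i _ => coord_moment hσ (by linarith) i),
          Finset.sum_const, Finset.card_univ, Fintype.card_fin, nsmul_eq_mul]
      push_cast
      ring
    have hA : (0:ℝ) ≤ (q-1)/((m:ℝ)+2) := by
      apply div_nonneg (by linarith) hn.le
    have h5 : ∫ x, ∑ i, |x i| ^ q ∂σ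
        ≤ ((m:ℝ)+2) * ((q-1)/((m:ℝ)+2)) ^ (q/2 : ℝ) := by
      rw [hint]
      exact mul_le_mul_of_nonneg_left (moment_bound hσ hq) hn.le
    have h6 : (∫ x, ∑ i, |x i| ^ q ∂σ) ^ (2/q : ℝ)
        ≤ (((m:ℝ)+2) * ((q-1)/((m:ℝ)+2)) ^ (q/2 : ℝ)) ^ (2/q : ℝ) :=
      Real.rpow_le_rpow (integral_nonneg hY0) h5 hq20
    have harith : (((m:ℝ)+2) * ((q-1)/((m:ℝ)+2)) ^ (q/2 : ℝ)) ^ (2/q : ℝ)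
        = (q-1) * ((m:ℝ)+2) ^ (2/q - 1 : ℝ) := by
      rw [Real.mul_rpow hn.le (Real.rpow_nonneg hA _), ← Real.rpow_mul hA,
          show (q/2) * (2/q) = 1 by field_simp, Real.rpow_one,
          Real.rpow_sub hn, Real.rpow_one]
      field_simp
    calc ∫ x, lqNorm q x ^ 2 ∂σ = ∫ x, (∑ i, |x i| ^ q) ^ (2/q : ℝ) ∂σ := by
          simp_rw [hpt]
      _ ≤ (∫ x, ∑ i, |x i| ^ q ∂σ) ^ (2/q : ℝ) := hH
      _ ≤ (((m:ℝ)+2) * ((q-1)/((m:ℝ)+2)) ^ (q/2 : ℝ)) ^ (2/q : ℝ) := h6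
      _ = (q-1) * ((m:ℝ)+2) ^ (2/q - 1 : ℝ) := harith

end Part2

/-- If `e` is uniform on the unit Euclidean sphere of `ℝⁿ` (`n ≥ 1`), then for every real
`q` with `2 ≤ q ≤ 2 ln n` one has `E[‖e‖_q²] ≤ (q - 1) n^{2/q - 1}`. -/
theorem sphere_lq_norm_moment {n : ℕ} (hn : 1 ≤ n)
    (σ : Measure (EuclideanSpace ℝ (Fin n))) (hσ : IsUniformOnSphere σ)
    (q : ℝ) (hq2 : 2 ≤ q) (hqn : q ≤ 2 * Real.log n) :
    ∫ e, lqNorm q e ^ 2 ∂σ ≤ (q - 1) * (n : ℝ) ^ (2 / q - 1) := by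
  match n, hn with
  | 1, _ =>
    exfalso
    rw [Nat.cast_one, Real.log_one, mul_zero] at hqn
    linarith
  | (m+2), _ =>
    exact Part2.final' hσ hq2
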